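/- There is no constant C>0 such that for all h ∈ (0,1], the inequality √(1/(24h)+h/24) ≤ C(√(h/15)+√((2/3)h)) holds. Consequently, the stability estimate ‖I^{BDM}v‖ ≲ ‖v‖ + Σ_{i,j}‖∂v_i/∂x_j‖ fails on the family of triangles T*(h) as h→0. -/

import Mathlib

/-- There is no constant `C > 0` such that for all `h ∈ (0,1]`,
`√(1/(24h) + h/24) ≤ C (√(h/15) + √((2/3)h))`.  Hence the stability estimate
`‖I^BDM v‖ ≲ ‖v‖ + Σ ‖∂v_i/∂x_j‖` fails on the family of triangles `T*(h)` as `h → 0`. -/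
theorem no_uniform_stability_constant :
    ¬ ∃ C : ℝ, 0 < C ∧ ∀ h : ℝ, 0 < h → h ≤ 1 →
      Real.sqrt (1 / (24 * h) + h / 24) ≤
        C * (Real.sqrt (h / 15) + Real.sqrt (2 / 3 * h)) := by
  rintro ⟨C, hC, hall⟩
  set h : ℝ := min 1 (1 / (24 * (2 * C + 1) ^ 2)) with hh
  have hden : (0:ℝ) < 24 * (2 * C + 1) ^ 2 := by positivity
  have hpos : 0 < h := lt_min one_pos (by positivity)
  have hle1 : h ≤ 1 := min_le_left _ _
  have key := hall h hpos hle1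
  -- lower bound for LHS
  have hle2 : h ≤ 1 / (24 * (2 * C + 1) ^ 2) := min_le_right _ _
  have hLHS : (2 * C + 1) ≤ Real.sqrt (1 / (24 * h) + h / 24) := by
    have h1 : (2 * C + 1) ^ 2 ≤ 1 / (24 * h) := by
      rw [le_div_iff₀ (by positivity)]
      calc (2 * C + 1) ^ 2 * (24 * h) ≤ (2 * C + 1) ^ 2 * (24 * (1 / (24 * (2 * C + 1) ^ 2))) := by
            apply mul_le_mul_of_nonneg_left _ (by positivity)
            linarith
        _ = 1 := by field_simp
    have h2 : (2 * C + 1) ^ 2 ≤ 1 / (24 * h) + h / 24 := by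
      have : 0 ≤ h / 24 := by positivity
      linarith
    calc 2 * C + 1 = Real.sqrt ((2 * C + 1) ^ 2) := by
          rw [Real.sqrt_sq (by positivity)]
      _ ≤ _ := Real.sqrt_le_sqrt h2
  -- upper bound for RHS
  have hsq : Real.sqrt h ≤ 1 := by
    rw [show (1:ℝ) = Real.sqrt 1 by simp]
    exact Real.sqrt_le_sqrt hle1
  have hr1 : Real.sqrt (h / 15) ≤ Real.sqrt h :=
    Real.sqrt_le_sqrt (by linarith)
  have hr2 : Real.sqrt (2 / 3 * h) ≤ Real.sqrt h :=
    Real.sqrt_le_sqrt (by linarith)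
  have hRHS : C * (Real.sqrt (h / 15) + Real.sqrt (2 / 3 * h)) ≤ 2 * C := by
    calc C * (Real.sqrt (h / 15) + Real.sqrt (2 / 3 * h))
        ≤ C * (Real.sqrt h + Real.sqrt h) := by
          apply mul_le_mul_of_nonneg_left (by linarith) hC.le
      _ = 2 * C * Real.sqrt h := by ring
      _ ≤ 2 * C * 1 := by
          apply mul_le_mul_of_nonneg_left hsq (by positivity)
      _ = 2 * C := by ring
  linarith
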